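/- Let φ*_i, i = 1,…,s, be s angles uniformly spaced on the unit circle, and suppose s·Δ > 4π. Then B_SW ⊆ ∪_{i=1}^s B_SW^{(i)}: every angle configuration on Λ_B realizing the event B_SW also realizes B_SW^{(i)} for some i, i.e., there exists an angle θ* such that the deviation variables defined from θ via θ* and φ* = φ*_i satisfy |ϑ_r| < Δ for every r ∈ Λ_B. -/

import Mathlib

open MeasureTheory Real Filter

noncomputable section
open scoped Classical

/-- The torus `T_L = (ℤ/L)²`. -/
abbrev Torus (L : ℕ) := ZMod L × ZMod L

/-- A spin configuration on `T_L`: at each site, an angle, i.e., a point of the circle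
`ℝ/2πℤ` (parametrizing a unit two-component spin). -/
abbrev Cfg (L : ℕ) := Torus L → Real.Angle

instance : Fact ((0 : ℝ) < 2 * π) := ⟨by positivity⟩

/-- Lebesgue measure on the unit circle (total mass `2π`). -/
instance : MeasureSpace Real.Angle :=
  inferInstanceAs (MeasureSpace (AddCircle (2 * π)))

instance : SigmaFinite (volume : Measure Real.Angle) :=
  inferInstanceAs (SigmaFinite (volume : Measure (AddCircle (2 * π))))

/-- The torus Hamiltonian `H_L` of the nnn antiferromagnet. -/
def angleH (L : ℕ) (hL : L ≠ 0) (J γ : ℝ) (θ : Cfg L) : ℝ :=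
  haveI : NeZero L := ⟨hL⟩
  J * ∑ r : Torus L,
      (2 + Real.Angle.cos (θ r - θ (r + (1, 1))) + Real.Angle.cos (θ r - θ (r + (1, -1))))
    + J * γ * ∑ r : Torus L,
        (Real.Angle.cos (θ r - θ (r + (1, 0))) + Real.Angle.cos (θ r - θ (r + (0, 1))))

/-- The partition function `Z_{L,β}` (w.r.t. the product of Lebesgue measures on circles). -/
def Zfull (L : ℕ) (hL : L ≠ 0) (β J γ : ℝ) : ℝ :=
  haveI : NeZero L := ⟨hL⟩
  ∫ θ : Cfg L, Real.exp (-(β * angleH L hL J γ θ))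

/-- The torus Gibbs measure `P_{L,β}`. -/
def gibbs (L : ℕ) (hL : L ≠ 0) (β J γ : ℝ) : Measure (Cfg L) :=
  haveI : NeZero L := ⟨hL⟩
  letI μ : Measure (Cfg L) :=
    volume.withDensity fun θ => ENNReal.ofReal (Real.exp (-(β * angleH L hL J γ θ)))
  (μ Set.univ)⁻¹ • μ

/-- Translation of a configuration by `B·t`, `t ∈ T_{L/B}` (represented by a pair of
naturals); the event `τ_t(A)` is `{θ | shiftT L B t θ ∈ A}`. -/
def shiftT (L B : ℕ) (t : ℕ × ℕ) (θ : Cfg L) : Cfg L :=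
  fun r => θ (r + (((B * t.1 : ℕ) : ZMod L), ((B * t.2 : ℕ) : ZMod L)))

/-- The constrained partition function `Z_{L,β}(A)`; `A` is simultaneously enforced in
all translates of `Λ_B` by vectors from `T_{L/B}`. -/
def Zconstr (L B : ℕ) (hL : L ≠ 0) (β J γ : ℝ) (A : Set (Cfg L)) : ℝ :=
  haveI : NeZero L := ⟨hL⟩
  ∫ θ : Cfg L, Real.exp (-(β * angleH L hL J γ θ)) *
    ∏ t ∈ Finset.range (L / B) ×ˢ Finset.range (L / B),
      (if shiftT L B t θ ∈ A then (1 : ℝ) else 0)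

/-- Membership in the block `Λ_B` of `(B+1) × (B+1)` sites based at the torus origin. -/
def inBlock (L B : ℕ) (r : Torus L) : Prop := r.1.val ≤ B ∧ r.2.val ≤ B

/-- `A` is a reflection-symmetric event in `Λ_B`: it depends only on the spins in `Λ_B`
and is invariant under the reflections of `Λ_B` in the coordinate planes through the
center of `Λ_B`. -/
def IsRS (L B : ℕ) (A : Set (Cfg L)) : Prop :=
  (∀ θ θ' : Cfg L, (∀ r, inBlock L B r → θ r = θ' r) → (θ ∈ A ↔ θ' ∈ A)) ∧
  (∀ θ : Cfg L, θ ∈ A → (fun r : Torus L => θ ((B : ZMod L) - r.1, r.2)) ∈ A) ∧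
  (∀ θ : Cfg L, θ ∈ A → (fun r : Torus L => θ (r.1, (B : ZMod L) - r.2)) ∈ A)

/-- The ground-state offset determined by the overall angle `θ*` and the relative
angle `φ*` between the Néel states of the even and the odd sublattice. -/
def offset (L : ℕ) (θs φs : ℝ) (r : Torus L) : ℝ :=
  if Even r.1.val then (if Even r.2.val then θs else θs + φs + π)
  else (if Even r.2.val then θs + φs else θs + π)

/-- The deviation variables (defined from `θ` via `θ*`, `φ*`) satisfy `|ϑ_r| < Δ`
throughout the block `Λ_B`. -/
def goodDev (L B : ℕ) (Δ θs φs : ℝ) (θ : Cfg L) : Prop :=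
  ∀ r : Torus L, inBlock L B r →
    |(θ r - ((offset L θs φs r : ℝ) : Real.Angle)).toReal| < Δ

/-- The good-block event `G₀` (sublattices aligned: `|φ*| ≤ κ`). -/
def G0 (L B : ℕ) (κ Δ : ℝ) : Set (Cfg L) :=
  {θ | ∃ θs φs : ℝ, |φs| ≤ κ ∧ goodDev L B Δ θs φs θ}

/-- The good-block event `G₁₈₀` (sublattices antialigned: `|φ* - π| ≤ κ`). -/
def G180 (L B : ℕ) (κ Δ : ℝ) : Set (Cfg L) :=
  {θ | ∃ θs φs : ℝ, |φs - π| ≤ κ ∧ goodDev L B Δ θs φs θ}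

/-- The bad-block event `B = (G₀ ∪ G₁₈₀)ᶜ`. -/
def BadEv (L B : ℕ) (κ Δ : ℝ) : Set (Cfg L) := (G0 L B κ Δ ∪ G180 L B κ Δ)ᶜ

/-- The energetically bad event `B_E`: some next-nearest neighbor pair in `Λ_B` has
`||θ_r − θ_{r'}| − π| ≥ Δ/(2B)`. -/
def BE (L B : ℕ) (Δ : ℝ) : Set (Cfg L) :=
  {θ | ∃ r r' : Torus L, inBlock L B r ∧ inBlock L B r' ∧
    (r' = r + (1, 1) ∨ r' = r + (1, -1) ∨ r = r' + (1, 1) ∨ r = r' + (1, -1)) ∧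
    Δ / (2 * (B : ℝ)) ≤ abs (|(θ r - θ r').toReal| - π)}

/-- The entropically bad event `B_SW = B \ B_E`. -/
def BSW (L B : ℕ) (κ Δ : ℝ) : Set (Cfg L) := BadEv L B κ Δ \ BE L B Δ

/-- The event `B_SW^{(i)}`: the block is bad, yet for some `θ*` the deviation variables
defined via `θ*` and `φ* = φᵢ` satisfy `|ϑ_r| < Δ` on `Λ_B`. -/
def BSWi (L B : ℕ) (κ Δ φi : ℝ) : Set (Cfg L) :=
  BadEv L B κ Δ ∩ {θ | ∃ θs : ℝ, goodDev L B Δ θs φi θ}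


private lemma abs_toReal_coe_le (z : ℝ) : |((z : ℝ) : Real.Angle).toReal| ≤ |z| := by
  rcases le_or_gt π |z| with h | h
  · exact (Real.Angle.abs_toReal_le_pi _).trans h
  · have hz : ((z : ℝ) : Real.Angle).toReal = z := by
      rw [Real.Angle.toReal_coe_eq_self_iff]
      have := abs_lt.1 h
      exact ⟨by linarith [this.1], le_of_lt this.2⟩
    rw [hz]

private lemma abs_toReal_add_le (a b : Real.Angle) :
    |(a + b).toReal| ≤ |a.toReal| + |b.toReal| := by
  have h : a + b = ((a.toReal + b.toReal : ℝ) : Real.Angle) := by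
    rw [Real.Angle.coe_add, Real.Angle.coe_toReal, Real.Angle.coe_toReal]
  rw [h]
  exact (abs_toReal_coe_le _).trans (abs_add_le _ _)

private lemma abs_toReal_neg_le (b : Real.Angle) : |(-b).toReal| ≤ |b.toReal| := by
  have h : -b = ((-(b.toReal) : ℝ) : Real.Angle) := by
    rw [Real.Angle.coe_neg, Real.Angle.coe_toReal]
  rw [h]
  exact (abs_toReal_coe_le _).trans (le_of_eq (abs_neg _))

private lemma abs_toReal_sub_le (a b : Real.Angle) :
    |(a - b).toReal| ≤ |a.toReal| + |b.toReal| := by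
  rw [sub_eq_add_neg]
  exact (abs_toReal_add_le _ _).trans (by linarith [abs_toReal_neg_le b])

private lemma step_conv {a b : Real.Angle} {ε : ℝ}
    (h : |(|(a - b).toReal|) - π| < ε) :
    |(a - b - ((π : ℝ) : Real.Angle)).toReal| ≤ ε := by
  set d := (a - b).toReal with hd
  have h1 : ((d - π : ℝ) : Real.Angle) = a - b - ((π : ℝ) : Real.Angle) := by
    rw [Real.Angle.coe_sub, hd, Real.Angle.coe_toReal]
  rw [← h1]
  rcases le_or_gt 0 d with hd0 | hd0
  · have : |d - π| < ε := by rwa [abs_of_nonneg hd0] at h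
    exact (abs_toReal_coe_le _).trans this.le
  · have h2 : ((d - π : ℝ) : Real.Angle) = ((d + π : ℝ) : Real.Angle) := by
      rw [Real.Angle.angle_eq_iff_two_pi_dvd_sub]
      exact ⟨-1, by push_cast; ring⟩
    rw [h2]
    have : |d + π| < ε := by
      rw [abs_of_neg hd0] at h
      calc |d + π| = |(-d) - π| := by rw [← abs_neg]; ring_nf
        _ < ε := h
    exact (abs_toReal_coe_le _).trans this.le


private lemma offset_flip (L : ℕ) (θs φs : ℝ) (p p' : Torus L)
    (h1 : Even p'.1.val ↔ ¬ Even p.1.val) (h2 : Even p'.2.val ↔ ¬ Even p.2.val) :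
    ((offset L θs φs p' : ℝ) : Real.Angle)
      = ((offset L θs φs p : ℝ) : Real.Angle) + ((π : ℝ) : Real.Angle) := by
  unfold offset
  by_cases hx : Even p.1.val <;> by_cases hy : Even p.2.val <;>
    simp only [hx, hy, h1, h2, if_pos, if_neg, not_true, not_false_iff, iff_true, iff_false,
      if_true, if_false] <;>
    simp [Real.Angle.coe_add, add_assoc, Real.Angle.coe_pi_add_coe_pi]


private lemma offset_eval (L : ℕ) (θs φs : ℝ) (x y : ZMod L) :
    offset L θs φs (x, y) = if Even x.val then (if Even y.val then θs else θs + φs + π)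
      else (if Even y.val then θs + φs else θs + π) := rfl

private lemma zigzag_even (B : ℕ) (ε : ℝ) (hε : 0 ≤ ε) (g : ℕ → ℕ → ℝ)
    (h0 : g 0 0 = 0)
    (hstep : ∀ x y x' y' : ℕ, x ≤ B → y ≤ B → x' ≤ B → y' ≤ B →
       ((x' = x + 1 ∧ y' = y + 1) ∨ (x = x' + 1 ∧ y = y' + 1) ∨
        (x' = x + 1 ∧ y = y' + 1) ∨ (x = x' + 1 ∧ y' = y + 1)) →
       g x y ≤ g x' y' + ε) :
    ∀ k x y, x ≤ B → y ≤ B → (x + y) % 2 = 0 → max x y ≤ k → g x y ≤ k * ε := by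
  intro k
  induction k with
  | zero =>
    intro x y hx hy hp hm
    rw [Nat.max_le] at hm
    obtain ⟨rfl, rfl⟩ : x = 0 ∧ y = 0 := by omega
    simp [h0]
  | succ k ih =>
    intro x y hx hy hp hm
    rw [Nat.max_le] at hm
    have hkε : ((k : ℝ) + 1) * ε = (k : ℝ) * ε + ε := by ring
    by_cases hk : x ≤ k ∧ y ≤ k
    · have h1 := ih x y hx hy hp (Nat.max_le.mpr hk)
      push_cast
      nlinarith
    · push_neg at hk
      by_cases hxk : x = k + 1
      · by_cases hyk : y = k + 1
        · have hst := hstep x y k k hx hy (by omega) (by omega)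
            (Or.inr (Or.inl ⟨by omega, by omega⟩))
          have h1 := ih k k (by omega) (by omega) (by omega) (by simp)
          push_cast
          linarith
        · have hy1 : y + 1 ≤ k := by omega
          have hst := hstep x y k (y + 1) hx hy (by omega) (by omega)
            (Or.inr (Or.inr (Or.inr ⟨by omega, by omega⟩)))
          have h1 := ih k (y + 1) (by omega) (by omega) (by omega)
            (Nat.max_le.mpr ⟨le_refl _, hy1⟩)
          push_cast
          linarith
      · have hyk : y = k + 1 := by omega
        have hx1 : x + 1 ≤ k := by omega
        have hst := hstep x y (x + 1) k hx hy (by omega) (by omega)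
          (Or.inr (Or.inr (Or.inl ⟨by omega, by omega⟩)))
        have h1 := ih (x + 1) k (by omega) (by omega) (by omega)
          (Nat.max_le.mpr ⟨hx1, le_refl _⟩)
        push_cast
        linarith

private lemma zigzag_odd (B : ℕ) (hB : 0 < B) (ε : ℝ) (hε : 0 ≤ ε) (g : ℕ → ℕ → ℝ)
    (h0 : g 1 0 = 0)
    (hstep : ∀ x y x' y' : ℕ, x ≤ B → y ≤ B → x' ≤ B → y' ≤ B →
       ((x' = x + 1 ∧ y' = y + 1) ∨ (x = x' + 1 ∧ y = y' + 1) ∨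
        (x' = x + 1 ∧ y = y' + 1) ∨ (x = x' + 1 ∧ y' = y + 1)) →
       g x y ≤ g x' y' + ε) :
    ∀ k x y, x ≤ B → y ≤ B → (x + y) % 2 = 1 → max (x - 1) y ≤ k → g x y ≤ k * ε := by
  intro k
  induction k with
  | zero =>
    intro x y hx hy hp hm
    rw [Nat.max_le] at hm
    obtain ⟨rfl, rfl⟩ : x = 1 ∧ y = 0 := by omega
    simp [h0]
  | succ k ih =>
    intro x y hx hy hp hm
    rw [Nat.max_le] at hm
    by_cases hk : x - 1 ≤ k ∧ y ≤ k
    · have h1 := ih x y hx hy hp (Nat.max_le.mpr hk)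
      push_cast
      nlinarith
    · push_neg at hk
      by_cases hyk : y = k + 1
      · by_cases hx0 : x = 0
        · have hst := hstep x y 1 k hx hy (by omega) (by omega)
            (Or.inr (Or.inr (Or.inl ⟨by omega, by omega⟩)))
          have h1 := ih 1 k (by omega) (by omega) (by omega)
            (Nat.max_le.mpr ⟨by omega, le_refl _⟩)
          push_cast
          linarith
        · have hst := hstep x y (x - 1) k hx hy (by omega) (by omega)
            (Or.inr (Or.inl ⟨by omega, by omega⟩))
          have h1 := ih (x - 1) k (by omega) (by omega) (by omega)
            (Nat.max_le.mpr ⟨by omega, le_refl _⟩)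
          push_cast
          linarith
      · have hxk : x = k + 2 := by omega
        have hy1 : y + 1 ≤ k := by omega
        have hst := hstep x y (k + 1) (y + 1) hx hy (by omega) (by omega)
          (Or.inr (Or.inr (Or.inr ⟨by omega, by omega⟩)))
        have h1 := ih (k + 1) (y + 1) (by omega) (by omega) (by omega)
          (Nat.max_le.mpr ⟨by omega, hy1⟩)
        push_cast
        linarith

/-- with `s` uniformly spaced angles `φ*_i = 2πi/s` and `sΔ > 4π`, the
event `B_SW` is covered by the events `B_SW^{(i)}`, `i = 1, …, s`. -/
theorem BSW_covering (L B s : ℕ) (hL : L ≠ 0) (hB : 0 < B)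
    (hLB : ∃ m : ℕ, 0 < m ∧ L = 2 * m * B) (h4 : 4 ∣ L)
    (κ Δ : ℝ) (hκ : 0 < κ) (hΔ : 0 < Δ) (hs : 4 * π < (s : ℝ) * Δ) :
    BSW L B κ Δ ⊆ ⋃ i : Fin s, BSWi L B κ Δ (2 * π * ((i : ℕ) : ℝ) / (s : ℝ)) := by
  haveI : NeZero L := ⟨hL⟩
  obtain ⟨m, hm, hLm⟩ := hLB
  have hBL : B < L := by
    have h2 : 2 * 1 * B ≤ 2 * m * B := Nat.mul_le_mul_right B (by omega)
    omega
  have hs0 : 0 < s := by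
    rcases Nat.eq_zero_or_pos s with rfl | h
    · simp only [Nat.cast_zero, zero_mul] at hs
      linarith [Real.pi_pos]
    · exact h
  have hsR : (0 : ℝ) < s := by exact_mod_cast hs0
  have hπs : π / s < Δ / 4 := by
    rw [div_lt_div_iff₀ hsR (by norm_num)]
    linarith
  intro θ hθ
  obtain ⟨hBad, hnBE⟩ := hθ
  set ε : ℝ := Δ / (2 * (B : ℝ)) with hεdef
  have hBR : (0 : ℝ) < B := by exact_mod_cast hB
  have hε0 : 0 ≤ ε := by positivity
  have hval : ∀ x : ℕ, x ≤ B → ((x : ZMod L)).val = x := fun x hx =>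
    ZMod.val_natCast_of_lt (lt_of_le_of_lt hx hBL)
  have hblock : ∀ x y : ℕ, x ≤ B → y ≤ B →
      inBlock L B (((x : ZMod L), (y : ZMod L)) : Torus L) := by
    intro x y hx hy
    exact ⟨(hval x hx).le.trans hx, (hval y hy).le.trans hy⟩
  -- step bound from the complement of B_E
  have hnnn : ∀ p p' : Torus L, inBlock L B p → inBlock L B p' →
      (p' = p + (1, 1) ∨ p' = p + (1, -1) ∨ p = p' + (1, 1) ∨ p = p' + (1, -1)) →
      |(θ p - θ p' - ((π : ℝ) : Real.Angle)).toReal| ≤ ε := by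
    intro p p' h1 h2 h3
    refine step_conv ?_
    by_contra hcon
    push_neg at hcon
    rw [hεdef] at hcon
    exact hnBE ⟨p, p', h1, h2, h3, hcon⟩
  -- the anchor angles
  set θs : ℝ := (θ (((0 : ℕ) : ZMod L), ((0 : ℕ) : ZMod L))).toReal with hθsdef
  set φs : ℝ := (θ (((1 : ℕ) : ZMod L), ((0 : ℕ) : ZMod L)) -
      θ (((0 : ℕ) : ZMod L), ((0 : ℕ) : ZMod L))).toReal with hφsdef
  set g : ℕ → ℕ → ℝ := fun x y =>
    |(θ (((x : ZMod L), (y : ZMod L)) : Torus L) -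
      ((offset L θs φs (((x : ZMod L), (y : ZMod L)) : Torus L) : ℝ) : Real.Angle)).toReal|
    with hgdef
  have hg0 : g 0 0 = 0 := by
    have hev : Even (((0 : ℕ) : ZMod L)).val := by
      rw [hval 0 (Nat.zero_le B)]; exact Even.zero
    have hoff : offset L θs φs ((((0 : ℕ) : ZMod L), ((0 : ℕ) : ZMod L)) : Torus L) = θs := by
      rw [offset_eval, if_pos hev, if_pos hev]
    rw [hgdef]
    simp only [hoff]
    simp only [hθsdef, Real.Angle.coe_toReal, sub_self, Real.Angle.toReal_zero, abs_zero]
  have hg1 : g 1 0 = 0 := by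
    have hod : ¬ Even (((1 : ℕ) : ZMod L)).val := by
      rw [hval 1 hB]; simp
    have hev : Even (((0 : ℕ) : ZMod L)).val := by
      rw [hval 0 (Nat.zero_le B)]; exact Even.zero
    have hoff : offset L θs φs ((((1 : ℕ) : ZMod L), ((0 : ℕ) : ZMod L)) : Torus L)
        = θs + φs := by
      rw [offset_eval, if_neg hod, if_pos hev]
    have hcoe : ((θs + φs : ℝ) : Real.Angle)
        = θ (((1 : ℕ) : ZMod L), ((0 : ℕ) : ZMod L)) := by
      rw [Real.Angle.coe_add, hθsdef, hφsdef, Real.Angle.coe_toReal, Real.Angle.coe_toReal]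
      abel
    rw [hgdef]
    simp only [hoff, hcoe, sub_self, Real.Angle.toReal_zero, abs_zero]
  -- the zigzag step for g
  have hgstep : ∀ x y x' y' : ℕ, x ≤ B → y ≤ B → x' ≤ B → y' ≤ B →
       ((x' = x + 1 ∧ y' = y + 1) ∨ (x = x' + 1 ∧ y = y' + 1) ∨
        (x' = x + 1 ∧ y = y' + 1) ∨ (x = x' + 1 ∧ y' = y + 1)) →
       g x y ≤ g x' y' + ε := by
    intro x y x' y' hx hy hx' hy' hrel
    set p : Torus L := ((x : ZMod L), (y : ZMod L)) with hpdef
    set p' : Torus L := ((x' : ZMod L), (y' : ZMod L)) with hp'def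
    have hzrel : p' = p + (1, 1) ∨ p' = p + (1, -1) ∨ p = p' + (1, 1) ∨ p = p' + (1, -1) := by
      rcases hrel with ⟨h1, h2⟩ | ⟨h1, h2⟩ | ⟨h1, h2⟩ | ⟨h1, h2⟩
      · refine Or.inl (Prod.ext ?_ ?_)
        · show ((x' : ℕ) : ZMod L) = ((x : ℕ) : ZMod L) + 1
          rw [h1]; push_cast; ring
        · show ((y' : ℕ) : ZMod L) = ((y : ℕ) : ZMod L) + 1
          rw [h2]; push_cast; ring
      · refine Or.inr (Or.inr (Or.inl (Prod.ext ?_ ?_)))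
        · show ((x : ℕ) : ZMod L) = ((x' : ℕ) : ZMod L) + 1
          rw [h1]; push_cast; ring
        · show ((y : ℕ) : ZMod L) = ((y' : ℕ) : ZMod L) + 1
          rw [h2]; push_cast; ring
      · refine Or.inr (Or.inl (Prod.ext ?_ ?_))
        · show ((x' : ℕ) : ZMod L) = ((x : ℕ) : ZMod L) + 1
          rw [h1]; push_cast; ring
        · show ((y' : ℕ) : ZMod L) = ((y : ℕ) : ZMod L) + (-1)
          rw [h2]; push_cast; ring
      · refine Or.inr (Or.inr (Or.inr (Prod.ext ?_ ?_)))
        · show ((x : ℕ) : ZMod L) = ((x' : ℕ) : ZMod L) + 1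
          rw [h1]; push_cast; ring
        · show ((y : ℕ) : ZMod L) = ((y' : ℕ) : ZMod L) + (-1)
          rw [h2]; push_cast; ring
    have hd := hnnn p p' (hblock x y hx hy) (hblock x' y' hx' hy') hzrel
    have hpar1 : Even p.1.val ↔ ¬ Even p'.1.val := by
      rw [hpdef, hp'def]
      dsimp only
      rw [hval x hx, hval x' hx', Nat.even_iff, Nat.even_iff]
      omega
    have hpar2 : Even p.2.val ↔ ¬ Even p'.2.val := by
      rw [hpdef, hp'def]
      dsimp only
      rw [hval y hy, hval y' hy', Nat.even_iff, Nat.even_iff]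
      omega
    have hflip := offset_flip L θs φs p' p hpar1 hpar2
    have hdec : θ p - ((offset L θs φs p : ℝ) : Real.Angle)
        = (θ p - θ p' - ((π : ℝ) : Real.Angle))
          + (θ p' - ((offset L θs φs p' : ℝ) : Real.Angle)) := by
      rw [hflip]; abel
    have hTri := abs_toReal_add_le (θ p - θ p' - ((π : ℝ) : Real.Angle))
      (θ p' - ((offset L θs φs p' : ℝ) : Real.Angle))
    rw [hgdef]
    dsimp only
    rw [← hpdef, ← hp'def, hdec]
    linarith
  have hBε : (B : ℝ) * ε = Δ / 2 := by
    rw [hεdef]; field_simp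
  have hEbound : ∀ x y : ℕ, x ≤ B → y ≤ B → (x + y) % 2 = 0 → g x y ≤ Δ / 2 := by
    intro x y hx hy hp
    have := zigzag_even B ε hε0 g hg0 hgstep B x y hx hy hp (Nat.max_le.mpr ⟨hx, hy⟩)
    linarith [hBε]
  have hObound : ∀ x y : ℕ, x ≤ B → y ≤ B → (x + y) % 2 = 1 → g x y ≤ Δ / 2 := by
    intro x y hx hy hp
    have := zigzag_odd B hB ε hε0 g hg1 hgstep B x y hx hy hp
      (Nat.max_le.mpr ⟨by omega, hy⟩)
    linarith [hBε]
  -- choice of the grid angle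
  set j : ℤ := round (φs * s / (2 * π)) with hjdef
  have hjapprox : |φs - 2 * π * j / s| ≤ π / s := by
    have h1 : |φs * s / (2 * π) - j| ≤ 1 / 2 := abs_sub_round _
    have hkey : φs - 2 * π * j / s = (φs * s / (2 * π) - j) * (2 * π / s) := by
      field_simp
    rw [hkey, abs_mul, abs_of_pos (by positivity : (0 : ℝ) < 2 * π / s)]
    calc |φs * s / (2 * π) - ↑j| * (2 * π / s) ≤ (1 / 2) * (2 * π / s) := by
          apply mul_le_mul_of_nonneg_right h1 (by positivity)
      _ = π / s := by ring
  set i : Fin s := ⟨(j % (s : ℤ)).toNat, by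
    have h1 : 0 ≤ j % (s : ℤ) := Int.emod_nonneg j (by exact_mod_cast hs0.ne')
    have h2 : j % (s : ℤ) < s := Int.emod_lt_of_pos j (by exact_mod_cast hs0)
    omega⟩ with hidef
  set φi : ℝ := 2 * π * ((i : ℕ) : ℝ) / (s : ℝ) with hφidef
  have hik : ((i : ℕ) : ℤ) = j % (s : ℤ) := by
    rw [hidef]
    exact Int.toNat_of_nonneg (Int.emod_nonneg j (by exact_mod_cast hs0.ne'))
  have hieq : ((φi : ℝ) : Real.Angle) = ((2 * π * j / s : ℝ) : Real.Angle) := by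
    rw [Real.Angle.angle_eq_iff_two_pi_dvd_sub]
    refine ⟨-(j / (s : ℤ)), ?_⟩
    have hdm := Int.mul_ediv_add_emod j (s : ℤ)
    have hint : ((i : ℕ) : ℤ) - j = (s : ℤ) * (-(j / (s : ℤ))) := by
      rw [hik, mul_neg]
      omega
    have hreal : ((i : ℕ) : ℝ) - (j : ℝ) = (s : ℝ) * (-(((j / (s : ℤ)) : ℤ) : ℝ)) := by
      exact_mod_cast congrArg (Int.cast : ℤ → ℝ) hint
    rw [hφidef]
    field_simp
    push_cast
    linear_combination hreal
  have hφidiff : |((φi - φs : ℝ) : Real.Angle).toReal| ≤ π / s := by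
    have hcoeq : ((φi - φs : ℝ) : Real.Angle) = ((2 * π * j / s - φs : ℝ) : Real.Angle) := by
      rw [Real.Angle.coe_sub, Real.Angle.coe_sub, hieq]
    rw [hcoeq]
    refine (abs_toReal_coe_le _).trans ?_
    rw [abs_sub_comm]
    exact hjapprox
  -- conclude
  rw [Set.mem_iUnion]
  refine ⟨i, hBad, θs, ?_⟩
  intro r hr
  obtain ⟨hrx, hry⟩ := hr
  have hfst : ((r.1.val : ℕ) : ZMod L) = r.1 := ZMod.natCast_rightInverse r.1
  have hsnd : ((r.2.val : ℕ) : ZMod L) = r.2 := ZMod.natCast_rightInverse r.2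
  have hreq : (((r.1.val : ZMod L), (r.2.val : ZMod L)) : Torus L) = r := by
    exact Prod.ext hfst hsnd
  rcases Nat.even_or_odd (r.1.val + r.2.val) with hpar | hpar
  · -- even sublattice: the offset does not involve φ
    have hp2 : (r.1.val + r.2.val) % 2 = 0 := Nat.even_iff.mp hpar
    have hiff : Even r.1.val ↔ Even r.2.val := by
      rw [Nat.even_iff, Nat.even_iff]; omega
    have hoffeq : offset L θs φi r = offset L θs φs r := by
      by_cases h1 : Even r.1.val
      · simp [offset, h1, hiff.mp h1]
      · have h2 : ¬ Even r.2.val := fun h => h1 (hiff.mpr h)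
        simp [offset, h1, h2]
    have hgb := hEbound r.1.val r.2.val hrx hry hp2
    rw [hgdef] at hgb
    dsimp only at hgb
    rw [hreq] at hgb
    rw [hoffeq]
    linarith
  · -- odd sublattice: adjust the offset by φi − φs
    have hp2 : (r.1.val + r.2.val) % 2 = 1 := Nat.odd_iff.mp hpar
    have hiff : Even r.1.val ↔ ¬ Even r.2.val := by
      rw [Nat.even_iff, Nat.even_iff]; omega
    have hoffeq : offset L θs φi r = offset L θs φs r + (φi - φs) := by
      by_cases h1 : Even r.1.val
      · have h2 : ¬ Even r.2.val := hiff.mp h1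
        simp only [offset, if_pos h1, if_neg h2]
        ring
      · have h2 : Even r.2.val := by
          by_contra h2
          exact h1 (hiff.mpr h2)
        simp only [offset, if_neg h1, if_pos h2]
        ring
    have hgb := hObound r.1.val r.2.val hrx hry hp2
    rw [hgdef] at hgb
    dsimp only at hgb
    rw [hreq] at hgb
    have hdec : θ r - ((offset L θs φi r : ℝ) : Real.Angle)
        = (θ r - ((offset L θs φs r : ℝ) : Real.Angle)) - ((φi - φs : ℝ) : Real.Angle) := by
      rw [hoffeq, Real.Angle.coe_add]
      abel
    rw [hdec]
    have hTri := abs_toReal_sub_le (θ r - ((offset L θs φs r : ℝ) : Real.Angle))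
      (((φi - φs : ℝ) : Real.Angle))
    linarith

end
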